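/- If there exist quaternion matrices X ∈ ℍ^{p1×n}, W ∈ ℍ^{m×q1}, Y ∈ ℍ^{p2×q2}, Z ∈ ℍ^{p3×q3} such that BX + WE + CYF + DZG = A, then r([A B C D; E 0 0 0; F 0 0 0; G 0 0 0]) = r([B C D]) + r([E; F; G]). -/

import Mathlib

open Matrix

abbrev H : Type := Quaternion ℝ

noncomputable def rk {α β : Type} [Fintype α] [Fintype β] (M : Matrix α β H) : ℕ :=
  Module.finrank Hᵐᵒᵖ (Submodule.span Hᵐᵒᵖ (Set.range fun j : β => fun i : α => M i j))

namespace RkAux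

open MulOpposite

/-- The column space of a quaternion matrix, as a right `H`-submodule. -/
noncomputable def colSpace {α β : Type} [Fintype α] [Fintype β] (M : Matrix α β H) :
    Submodule Hᵐᵒᵖ (α → H) :=
  Submodule.span Hᵐᵒᵖ (Set.range fun j : β => fun i : α => M i j)

lemma rk_eq {α β : Type} [Fintype α] [Fintype β] (M : Matrix α β H) :
    rk M = Module.finrank Hᵐᵒᵖ (colSpace M) := rfl

lemma finite_colSpace {α β : Type} [Fintype α] [Fintype β] (M : Matrix α β H) :
    Module.Finite Hᵐᵒᵖ (colSpace M) :=
  Module.Finite.span_of_finite _ (Set.finite_range _)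

/-- Left multiplication by a matrix is right-`H`-linear on column vectors. -/
noncomputable def mulVecLinOp {α β : Type} [Fintype α] [Fintype β] (P : Matrix α β H) :
    (β → H) →ₗ[Hᵐᵒᵖ] (α → H) where
  toFun v := P.mulVec v
  map_add' u v := P.mulVec_add u v
  map_smul' a v := by
    funext i
    simp only [Matrix.mulVec, dotProduct, Pi.smul_apply, RingHom.id_apply]
    rw [← op_unop a]
    simp only [op_smul_eq_mul]
    rw [Finset.sum_mul]
    congr 1
    funext j
    rw [mul_assoc]

lemma mulVecLinOp_apply {α β : Type} [Fintype α] [Fintype β] (P : Matrix α β H) (v : β → H) :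
    mulVecLinOp P v = P.mulVec v := rfl

/-- The linear equivalence given by an invertible matrix. -/
noncomputable def mulVecEquiv {α : Type} [Fintype α] [DecidableEq α] (P P' : Matrix α α H)
    (h1 : P * P' = 1) (h2 : P' * P = 1) : (α → H) ≃ₗ[Hᵐᵒᵖ] (α → H) :=
  LinearEquiv.ofLinear (mulVecLinOp P) (mulVecLinOp P')
    (LinearMap.ext fun v => by
      simp [mulVecLinOp_apply, Matrix.mulVec_mulVec, h1, Matrix.one_mulVec])
    (LinearMap.ext fun v => by
      simp [mulVecLinOp_apply, Matrix.mulVec_mulVec, h2, Matrix.one_mulVec])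

lemma colSpace_mul_le {α β γ : Type} [Fintype α] [Fintype β] [Fintype γ]
    (M : Matrix α β H) (N : Matrix β γ H) :
    colSpace (M * N) ≤ colSpace M := by
  rw [colSpace, Submodule.span_le]
  rintro _ ⟨j, rfl⟩
  have hc : (fun i : α => (M * N) i j) = ∑ k : β, op (N k j) • (fun i : α => M i k) := by
    funext i
    simp only [Matrix.mul_apply, Finset.sum_apply, Pi.smul_apply, op_smul_eq_mul]
  show (fun i : α => (M * N) i j) ∈ colSpace M
  rw [hc]
  exact Submodule.sum_mem _ fun k _ =>
    Submodule.smul_mem _ _ (Submodule.subset_span ⟨k, rfl⟩)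

lemma rk_mul_right {α β : Type} [Fintype α] [Fintype β] [DecidableEq β] (M : Matrix α β H)
    (Q Q' : Matrix β β H) (h1 : Q * Q' = 1) :
    rk (M * Q) = rk M := by
  have hle : colSpace M ≤ colSpace (M * Q) := by
    have hM : M = M * Q * Q' := by rw [Matrix.mul_assoc, h1, Matrix.mul_one]
    conv_lhs => rw [hM]
    exact colSpace_mul_le _ _
  rw [rk_eq, rk_eq, le_antisymm (colSpace_mul_le _ _) hle]

lemma colSpace_mul_eq_map {α β γ : Type} [Fintype α] [Fintype β] [Fintype γ]
    (P : Matrix α β H) (M : Matrix β γ H) :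
    colSpace (P * M) = Submodule.map (mulVecLinOp P) (colSpace M) := by
  rw [colSpace, colSpace, Submodule.map_span, ← Set.range_comp]
  have h : (fun j : γ => fun i : α => (P * M) i j)
      = ⇑(mulVecLinOp P) ∘ (fun j : γ => fun i : β => M i j) := by
    funext j i
    simp [mulVecLinOp_apply, Matrix.mulVec, dotProduct, Matrix.mul_apply]
  rw [h]

lemma rk_mul_left {α β : Type} [Fintype α] [Fintype β] [DecidableEq α]
    (P P' : Matrix α α H) (h1 : P * P' = 1) (h2 : P' * P = 1) (M : Matrix α β H) :
    rk (P * M) = rk M := by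
  rw [rk_eq, rk_eq, colSpace_mul_eq_map]
  have : (mulVecLinOp P) = ((mulVecEquiv P P' h1 h2 : (α → H) ≃ₗ[Hᵐᵒᵖ] (α → H)) :
      (α → H) →ₗ[Hᵐᵒᵖ] (α → H)) := rfl
  rw [this]
  exact LinearEquiv.finrank_map_eq _ _

lemma rk_submatrix {α α' β β' : Type} [Fintype α] [Fintype α'] [Fintype β] [Fintype β']
    (M : Matrix α β H) (er : α' ≃ α) (ec : β' ≃ β) :
    rk (M.submatrix er ec) = rk M := by
  have hc : colSpace (M.submatrix er ec)
      = Submodule.map ((LinearEquiv.funCongrLeft Hᵐᵒᵖ H er :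
          (α → H) ≃ₗ[Hᵐᵒᵖ] (α' → H)) : (α → H) →ₗ[Hᵐᵒᵖ] (α' → H)) (colSpace M) := by
    rw [colSpace, colSpace, Submodule.map_span]
    congr 1
    rw [← Set.range_comp]
    have h1 : (fun j : β' => fun i' : α' => M.submatrix er ec i' j)
        = (fun j : β => fun i' : α' => M (er i') j) ∘ ec := rfl
    rw [h1, ec.surjective.range_comp]
    rfl
  rw [rk_eq, rk_eq, hc, LinearEquiv.finrank_map_eq]

lemma finrank_prod_submodule {M M₂ : Type} [AddCommGroup M] [AddCommGroup M₂]
    [Module Hᵐᵒᵖ M] [Module Hᵐᵒᵖ M₂]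
    (p : Submodule Hᵐᵒᵖ M) (q : Submodule Hᵐᵒᵖ M₂)
    [Module.Finite Hᵐᵒᵖ p] [Module.Finite Hᵐᵒᵖ q] :
    Module.finrank Hᵐᵒᵖ (p.prod q) = Module.finrank Hᵐᵒᵖ p + Module.finrank Hᵐᵒᵖ q := by
  have e : (p × q) ≃ₗ[Hᵐᵒᵖ] (p.prod q) :=
    { toFun := fun x => ⟨(x.1.1, x.2.1), ⟨x.1.2, x.2.2⟩⟩
      invFun := fun x => (⟨x.1.1, x.2.1⟩, ⟨x.1.2, x.2.2⟩)
      map_add' := fun a b => rfl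
      map_smul' := fun a b => rfl
      left_inv := fun x => rfl
      right_inv := fun x => rfl }
  rw [← e.finrank_eq, Module.finrank_prod]

lemma rk_fromBlocks_antidiag {α β γ δ : Type} [Fintype α] [Fintype β] [Fintype γ] [Fintype δ]
    (B : Matrix α β H) (E : Matrix γ δ H) :
    rk (fromBlocks (0 : Matrix α δ H) B E (0 : Matrix γ β H)) = rk B + rk E := by
  classical
  set N := fromBlocks (0 : Matrix α δ H) B E (0 : Matrix γ β H) with hN
  let e : (α ⊕ γ → H) ≃ₗ[Hᵐᵒᵖ] (α → H) × (γ → H) :=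
    LinearEquiv.sumArrowLequivProdArrow α γ Hᵐᵒᵖ H
  have hmap : Submodule.map (e : (α ⊕ γ → H) →ₗ[Hᵐᵒᵖ] (α → H) × (γ → H)) (colSpace N)
      = (colSpace B).prod (colSpace E) := by
    rw [colSpace, Submodule.map_span, ← Set.range_comp]
    have h1 : (⇑(e.toLinearMap) ∘ fun j : δ ⊕ β => fun i : α ⊕ γ => N i j)
        = Sum.elim
            (fun j : δ => (LinearMap.inr Hᵐᵒᵖ (α → H) (γ → H)) (fun i : γ => E i j))
            (fun j : β => (LinearMap.inl Hᵐᵒᵖ (α → H) (γ → H)) (fun i : α => B i j)) := by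
      funext j
      rcases j with j | j <;> rfl
    have h2 : (Set.range fun j : δ => (LinearMap.inr Hᵐᵒᵖ (α → H) (γ → H)) (fun i : γ => E i j))
        = Set.range (⇑(LinearMap.inr Hᵐᵒᵖ (α → H) (γ → H)) ∘ fun j : δ => fun i : γ => E i j) :=
      rfl
    have h3 : (Set.range fun j : β => (LinearMap.inl Hᵐᵒᵖ (α → H) (γ → H)) (fun i : α => B i j))
        = Set.range (⇑(LinearMap.inl Hᵐᵒᵖ (α → H) (γ → H)) ∘ fun j : β => fun i : α => B i j) :=
      rfl
    rw [h1, Set.Sum.elim_range, h2, h3, Set.range_comp, Set.range_comp, Set.union_comm,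
      LinearMap.span_inl_union_inr]
    rfl
  haveI := finite_colSpace B
  haveI := finite_colSpace E
  rw [rk_eq, rk_eq, rk_eq, ← LinearEquiv.finrank_map_eq e (colSpace N), hmap,
    finrank_prod_submodule]

/-- Reassociation equivalence for four summands. -/
def assoc4 (a b c d : Type) : ((a ⊕ b) ⊕ c) ⊕ d ≃ a ⊕ ((b ⊕ c) ⊕ d) where
  toFun x := match x with
    | .inl (.inl (.inl x)) => .inl x
    | .inl (.inl (.inr x)) => .inr (.inl (.inl x))
    | .inl (.inr x) => .inr (.inl (.inr x))
    | .inr x => .inr (.inr x)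
  invFun x := match x with
    | .inl x => .inl (.inl (.inl x))
    | .inr (.inl (.inl x)) => .inl (.inl (.inr x))
    | .inr (.inl (.inr x)) => .inl (.inr x)
    | .inr (.inr x) => .inr x
  left_inv := by rintro (((x | x) | x) | x) <;> rfl
  right_inv := by rintro (x | ((x | x) | x)) <;> rfl

end RkAux

open RkAux

theorem stmt_13 {m n p1 p2 p3 q1 q2 q3 : ℕ}
    (A : Matrix (Fin m) (Fin n) H) (B : Matrix (Fin m) (Fin p1) H)
    (C : Matrix (Fin m) (Fin p2) H) (D : Matrix (Fin m) (Fin p3) H)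
    (E : Matrix (Fin q1) (Fin n) H) (F : Matrix (Fin q2) (Fin n) H)
    (G : Matrix (Fin q3) (Fin n) H)
    (hcon : ∃ (X : Matrix (Fin p1) (Fin n) H) (W : Matrix (Fin m) (Fin q1) H) (Y : Matrix (Fin p2) (Fin q2) H) (Z : Matrix (Fin p3) (Fin q3) H), B * X + W * E + C * Y * F + D * Z * G = A) :
    rk (Matrix.fromRows (Matrix.fromRows (Matrix.fromRows (Matrix.fromCols (Matrix.fromCols (Matrix.fromCols A B) C) D) (Matrix.fromCols (Matrix.fromCols (Matrix.fromCols E (0 : Matrix (Fin q1) (Fin p1) H)) (0 : Matrix (Fin q1) (Fin p2) H)) (0 : Matrix (Fin q1) (Fin p3) H))) (Matrix.fromCols (Matrix.fromCols (Matrix.fromCols F (0 : Matrix (Fin q2) (Fin p1) H)) (0 : Matrix (Fin q2) (Fin p2) H)) (0 : Matrix (Fin q2) (Fin p3) H))) (Matrix.fromCols (Matrix.fromCols (Matrix.fromCols G (0 : Matrix (Fin q3) (Fin p1) H)) (0 : Matrix (Fin q3) (Fin p2) H)) (0 : Matrix (Fin q3) (Fin p3) H))) = rk (Matrix.fromCols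 (Matrix.fromCols B C) D) + rk (Matrix.fromRows (Matrix.fromRows E F) G) := by
  classical
  obtain ⟨X, W, Y, Z, hA⟩ := hcon
  set B' : Matrix (Fin m) ((Fin p1 ⊕ Fin p2) ⊕ Fin p3) H :=
    Matrix.fromCols (Matrix.fromCols B C) D with hB'
  set E' : Matrix ((Fin q1 ⊕ Fin q2) ⊕ Fin q3) (Fin n) H :=
    Matrix.fromRows (Matrix.fromRows E F) G with hE'
  set W' : Matrix (Fin m) ((Fin q1 ⊕ Fin q2) ⊕ Fin q3) H :=
    Matrix.fromCols (Matrix.fromCols W 0) 0 with hW'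
  set X' : Matrix ((Fin p1 ⊕ Fin p2) ⊕ Fin p3) (Fin n) H :=
    Matrix.fromRows (Matrix.fromRows X (Y * F)) (Z * G) with hX'
  -- the big matrix is a reindexing of a 2×2 block matrix
  have hbig :
      (Matrix.fromRows (Matrix.fromRows (Matrix.fromRows (Matrix.fromCols (Matrix.fromCols (Matrix.fromCols A B) C) D) (Matrix.fromCols (Matrix.fromCols (Matrix.fromCols E (0 : Matrix (Fin q1) (Fin p1) H)) (0 : Matrix (Fin q1) (Fin p2) H)) (0 : Matrix (Fin q1) (Fin p3) H))) (Matrix.fromCols (Matrix.fromCols (Matrix.fromCols F (0 : Matrix (Fin q2) (Fin p1) H)) (0 : Matrix (Fin q2) (Fin p2) H)) (0 : Matrix (Fin q2) (Fin p3) H))) (Matrix.fromCols (Matrix.fromCols (Matrix.fromCols G (0 : Matrix (Fin q3) (Fin p1) H)) (0 : Matrix (Fin q3) (Fin p2) H)) (0 : Matrix (Fin q3) (Fin p3) H)))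
        = (fromBlocks A B' E' 0).submatrix
            (assoc4 (Fin m) (Fin q1) (Fin q2) (Fin q3))
            (assoc4 (Fin n) (Fin p1) (Fin p2) (Fin p3)) := by
    apply Matrix.ext
    rintro (((i | i) | i) | i) (((j | j) | j) | j) <;> rfl
  rw [hbig, rk_submatrix]
  -- factorization
  have hA' : B' * X' + W' * E' = A := by
    rw [hB', hE', hW', hX', fromCols_mul_fromRows, fromCols_mul_fromRows,
      fromCols_mul_fromRows, fromCols_mul_fromRows]
    simp only [Matrix.zero_mul, add_zero]
    rw [← hA, ← Matrix.mul_assoc, ← Matrix.mul_assoc]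
    abel
  have hfact : fromBlocks A B' E' (0 : Matrix ((Fin q1 ⊕ Fin q2) ⊕ Fin q3) ((Fin p1 ⊕ Fin p2) ⊕ Fin p3) H)
      = (fromBlocks 1 W' 0 1 : Matrix (Fin m ⊕ ((Fin q1 ⊕ Fin q2) ⊕ Fin q3)) (Fin m ⊕ ((Fin q1 ⊕ Fin q2) ⊕ Fin q3)) H) * ((fromBlocks 0 B' E' 0 : Matrix (Fin m ⊕ ((Fin q1 ⊕ Fin q2) ⊕ Fin q3)) (Fin n ⊕ ((Fin p1 ⊕ Fin p2) ⊕ Fin p3)) H) * (fromBlocks 1 0 X' 1 : Matrix (Fin n ⊕ ((Fin p1 ⊕ Fin p2) ⊕ Fin p3)) (Fin n ⊕ ((Fin p1 ⊕ Fin p2) ⊕ Fin p3)) H)) := by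
    rw [fromBlocks_multiply, fromBlocks_multiply]
    simp only [Matrix.one_mul, Matrix.mul_one, Matrix.zero_mul, Matrix.mul_zero,
      add_zero, zero_add, Matrix.mul_assoc]
    rw [hA']
  rw [hfact]
  rw [rk_mul_left (fromBlocks 1 W' 0 1) (fromBlocks 1 (-W') 0 1)
    (by rw [fromBlocks_multiply]; simp [fromBlocks_one])
    (by rw [fromBlocks_multiply]; simp [fromBlocks_one])]
  rw [rk_mul_right _ (fromBlocks 1 0 X' 1) (fromBlocks 1 0 (-X') 1)
    (by rw [fromBlocks_multiply]; simp [fromBlocks_one])]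
  exact rk_fromBlocks_antidiag B' E'
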